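/- arXiv:1101.0637 — 3 statements merged into one kernel-verified Lean document; each statement's English description precedes it below -/
import Mathlib

section
/- Let m₁ ≤ m₂ ≤ m₃ be real-valued differentiable functions on an interval satisfying the ODE system m₁' = m₁² + m₂m₃, m₂' = m₂² + m₁m₃, m₃' = m₃² + m₁m₂. If m₁ + m₂ > 0 and m₃ > 0 throughout, then (m₁ + m₂)/m₃ is nondecreasing. -/
open Set

/-- Along the curvature eigenvalue ODE, if `m₁ + m₂ > 0` and `m₃ > 0`, the ratio
`(m₁ + m₂)/m₃` is nondecreasing. -/
theorem ratio_monotone (T : ℝ) (m₁ m₂ m₃ : ℝ → ℝ)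
    (hord : ∀ t ∈ Ico (0 : ℝ) T, m₁ t ≤ m₂ t ∧ m₂ t ≤ m₃ t)
    (h₁ : ∀ t ∈ Ico (0 : ℝ) T, HasDerivAt m₁ ((m₁ t) ^ 2 + m₂ t * m₃ t) t)
    (h₂ : ∀ t ∈ Ico (0 : ℝ) T, HasDerivAt m₂ ((m₂ t) ^ 2 + m₁ t * m₃ t) t)
    (h₃ : ∀ t ∈ Ico (0 : ℝ) T, HasDerivAt m₃ ((m₃ t) ^ 2 + m₁ t * m₂ t) t)
    (hpos : ∀ t ∈ Ico (0 : ℝ) T, 0 < m₁ t + m₂ t)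
    (hpos₃ : ∀ t ∈ Ico (0 : ℝ) T, 0 < m₃ t) :
    MonotoneOn (fun t => (m₁ t + m₂ t) / m₃ t) (Ico (0 : ℝ) T) := by
  set f := fun t => (m₁ t + m₂ t) / m₃ t with hf
  have key : ∀ t ∈ Ico (0 : ℝ) T, HasDerivAt f
      (((m₁ t) ^ 2 * (m₃ t - m₂ t) + (m₂ t) ^ 2 * (m₃ t - m₁ t)) / (m₃ t) ^ 2) t := by
    intro t ht
    have hne : m₃ t ≠ 0 := (hpos₃ t ht).ne'
    have h := ((h₁ t ht).add (h₂ t ht)).div (h₃ t ht) hne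
    refine h.congr_deriv ?_
    simp only [Pi.add_apply]
    ring
  have hderiv : ∀ t ∈ Ico (0 : ℝ) T,
      0 ≤ ((m₁ t) ^ 2 * (m₃ t - m₂ t) + (m₂ t) ^ 2 * (m₃ t - m₁ t)) / (m₃ t) ^ 2 := by
    intro t ht
    obtain ⟨h12, h23⟩ := hord t ht
    have h13 := h12.trans h23
    apply div_nonneg
    · have := sq_nonneg (m₁ t); have := sq_nonneg (m₂ t); nlinarith
    · positivity
  apply monotoneOn_of_deriv_nonneg (convex_Ico 0 T)
  · exact fun t ht => ((key t ht).continuousAt).continuousWithinAt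
  · intro t ht
    rw [interior_Ico] at ht
    exact (key t (Ioo_subset_Ico_self ht)).differentiableAt.differentiableWithinAt
  · intro t ht
    rw [interior_Ico] at ht
    rw [(key t (Ioo_subset_Ico_self ht)).deriv]
    exact hderiv t (Ioo_subset_Ico_self ht)
end

section
/- Let m₁ ≤ m₂ ≤ m₃ be differentiable functions on an interval satisfying m₁' = m₁² + m₂m₃, m₂' = m₂² + m₁m₃, m₃' = m₃² + m₁m₂. If m₁ + m₂ > 0 throughout, then m₁ + m₂ is nondecreasing. -/
open Set

/-- Along the curvature eigenvalue ODE, if `m₁ + m₂ > 0` then `m₁ + m₂` is nondecreasing. -/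
theorem sum_monotone (T : ℝ) (m₁ m₂ m₃ : ℝ → ℝ)
    (hord : ∀ t ∈ Ico (0 : ℝ) T, m₁ t ≤ m₂ t ∧ m₂ t ≤ m₃ t)
    (h₁ : ∀ t ∈ Ico (0 : ℝ) T, HasDerivAt m₁ ((m₁ t) ^ 2 + m₂ t * m₃ t) t)
    (h₂ : ∀ t ∈ Ico (0 : ℝ) T, HasDerivAt m₂ ((m₂ t) ^ 2 + m₁ t * m₃ t) t)
    (h₃ : ∀ t ∈ Ico (0 : ℝ) T, HasDerivAt m₃ ((m₃ t) ^ 2 + m₁ t * m₂ t) t)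
    (hpos : ∀ t ∈ Ico (0 : ℝ) T, 0 < m₁ t + m₂ t) :
    MonotoneOn (fun t => m₁ t + m₂ t) (Ico (0 : ℝ) T) := by
  have hsub : Ioo (0 : ℝ) T ⊆ Ico 0 T := Ioo_subset_Ico_self
  have hd : ∀ t ∈ Ico (0 : ℝ) T,
      HasDerivAt (fun t => m₁ t + m₂ t)
        ((m₁ t) ^ 2 + m₂ t * m₃ t + ((m₂ t) ^ 2 + m₁ t * m₃ t)) t :=
    fun t ht => (h₁ t ht).add (h₂ t ht)
  apply monotoneOn_of_deriv_nonneg (convex_Ico 0 T)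
  · exact fun t ht => (hd t ht).continuousAt.continuousWithinAt
  · rw [interior_Ico]
    exact fun t ht => ((hd t (hsub ht)).differentiableAt).differentiableWithinAt
  · rw [interior_Ico]
    intro t ht
    have ht' := hsub ht
    rw [(hd t ht').deriv]
    obtain ⟨h12, h23⟩ := hord t ht'
    have hp := hpos t ht'
    have h3 : 0 < m₃ t := by linarith
    nlinarith [sq_nonneg (m₁ t), sq_nonneg (m₂ t), mul_pos h3 hp]
end

section
/- Let m₁ ≤ m₂ ≤ m₃ be differentiable functions on [0,T) satisfying the eigenvalue ODE system m₁' = m₁² + m₂m₃, m₂' = m₂² + m₁m₃, m₃' = m₃² + m₁m₂. If at time 0 we have m₁ + m₂ ≥ C₁ > 0 and (m₁+m₂)/m₃ ≥ C₂ > 0, then these two inequalities persist for all t ∈ [0,T). -/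
open Set MeasureTheory Topology

/-- Persistence of the pinching conditions along the curvature eigenvalue ODE:
if `m₁ + m₂ ≥ C₁ > 0` and `(m₁+m₂)/m₃ ≥ C₂ > 0` at time `0`, then these hold
for all `t ∈ [0,T)`. -/
theorem pinching_persists (T : ℝ) (hT : 0 < T) (C₁ C₂ : ℝ) (hC₁ : 0 < C₁) (hC₂ : 0 < C₂)
    (m₁ m₂ m₃ : ℝ → ℝ)
    (hord : ∀ t ∈ Ico (0 : ℝ) T, m₁ t ≤ m₂ t ∧ m₂ t ≤ m₃ t)
    (h₁ : ∀ t ∈ Ico (0 : ℝ) T, HasDerivAt m₁ ((m₁ t) ^ 2 + m₂ t * m₃ t) t)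
    (h₂ : ∀ t ∈ Ico (0 : ℝ) T, HasDerivAt m₂ ((m₂ t) ^ 2 + m₁ t * m₃ t) t)
    (h₃ : ∀ t ∈ Ico (0 : ℝ) T, HasDerivAt m₃ ((m₃ t) ^ 2 + m₁ t * m₂ t) t)
    (hinit₁ : C₁ ≤ m₁ 0 + m₂ 0)
    (hinit₂ : C₂ ≤ (m₁ 0 + m₂ 0) / m₃ 0) :
    ∀ t ∈ Ico (0 : ℝ) T, C₁ ≤ m₁ t + m₂ t ∧ C₂ ≤ (m₁ t + m₂ t) / m₃ t := by
  set M : ℝ → ℝ := fun t => ∫ x in (0:ℝ)..t, m₃ x with hMdef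
  -- Part 1 : persistence of C₁ ≤ m₁ + m₂
  have key₁ : ∀ t ∈ Ico (0:ℝ) T, C₁ ≤ m₁ t + m₂ t := by
    intro t₁ ht₁
    rcases eq_or_lt_of_le ht₁.1 with h0 | h0
    · rw [← h0]; exact hinit₁
    have hsub : Icc (0:ℝ) t₁ ⊆ Ico 0 T := fun x hx => ⟨hx.1, lt_of_le_of_lt hx.2 ht₁.2⟩
    have hm₃cont : ContinuousOn m₃ (Icc 0 t₁) := fun x hx =>
      ((h₃ x (hsub hx)).continuousAt).continuousWithinAt
    have hIntOn : IntegrableOn m₃ (Icc (0:ℝ) t₁) volume := hm₃cont.integrableOn_Icc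
    have hMcont : ContinuousOn M (Icc 0 t₁) := by
      have h := intervalIntegral.continuousOn_primitive_interval
        (μ := volume) (a := (0:ℝ)) (b := t₁) (f := m₃) (by rwa [uIcc_of_le h0.le])
      rwa [uIcc_of_le h0.le] at h
    have hMderiv : ∀ x ∈ Ioo (0:ℝ) t₁, HasDerivAt M (m₃ x) x := by
      intro x hx
      have hxI : x ∈ Ico 0 T := ⟨hx.1.le, lt_trans hx.2 ht₁.2⟩
      have hint : IntervalIntegrable m₃ volume 0 x := by
        apply ContinuousOn.intervalIntegrable
        rw [uIcc_of_le hx.1.le]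
        exact hm₃cont.mono (Icc_subset_Icc_right hx.2.le)
      have hmeas : StronglyMeasurableAtFilter m₃ (𝓝 x) volume := by
        refine ContinuousAt.stronglyMeasurableAtFilter (s := Ioo (0:ℝ) T) isOpen_Ioo
          (fun y hy => (h₃ y ⟨hy.1.le, hy.2⟩).continuousAt) x ⟨hx.1, lt_trans hx.2 ht₁.2⟩
      exact intervalIntegral.integral_hasDerivAt_right hint hmeas (h₃ x hxI).continuousAt
    set ψ : ℝ → ℝ := fun u => (m₁ u + m₂ u) * Real.exp (-(M u)) with hψdef
    have hψderiv : ∀ x ∈ Ioo (0:ℝ) t₁,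
        HasDerivAt ψ (((m₁ x) ^ 2 + (m₂ x) ^ 2) * Real.exp (-(M x))) x := by
      intro x hx
      have hxI : x ∈ Ico 0 T := ⟨hx.1.le, lt_trans hx.2 ht₁.2⟩
      have hs := (h₁ x hxI).add (h₂ x hxI)
      have hE := ((hMderiv x hx).neg).exp
      have h : HasDerivAt (fun u => (m₁ u + m₂ u) * Real.exp (-(M u))) ((m₁ x ^ 2 + m₂ x * m₃ x + (m₂ x ^ 2 + m₁ x * m₃ x)) * Real.exp (-(M x)) + (m₁ x + m₂ x) * (Real.exp (-(M x)) * -m₃ x)) x := hs.mul hE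
      convert h using 1
      ring
    have hscont : ContinuousOn (fun u => m₁ u + m₂ u) (Icc 0 t₁) := fun x hx =>
      (((h₁ x (hsub hx)).continuousAt).add ((h₂ x (hsub hx)).continuousAt)).continuousWithinAt
    have hψcont : ContinuousOn ψ (Icc 0 t₁) :=
      hscont.mul (Real.continuous_exp.comp_continuousOn hMcont.neg)
    have hψmono : MonotoneOn ψ (Icc 0 t₁) := by
      apply monotoneOn_of_deriv_nonneg (convex_Icc 0 t₁) hψcont
      · rw [interior_Icc]
        exact fun x hx => (hψderiv x hx).differentiableAt.differentiableWithinAt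
      · rw [interior_Icc]
        intro x hx
        rw [(hψderiv x hx).deriv]
        positivity
    have hM0 : M 0 = 0 := intervalIntegral.integral_same
    have h0mem : (0:ℝ) ∈ Icc (0:ℝ) t₁ := ⟨le_refl 0, h0.le⟩
    have hψ0 : ψ 0 = m₁ 0 + m₂ 0 := by simp [hψdef, hM0]
    have hspos : ∀ x ∈ Icc (0:ℝ) t₁, 0 < m₁ x + m₂ x := by
      intro x hx
      have h := hψmono h0mem hx hx.1
      rw [hψ0] at h
      simp only [hψdef] at h
      nlinarith [Real.exp_pos (-(M x))]
    have hm₃pos : ∀ x ∈ Icc (0:ℝ) t₁, 0 < m₃ x := by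
      intro x hx
      have h := hord x (hsub hx)
      have h' := hspos x hx
      linarith [h.1, h.2]
    have hMmono : MonotoneOn M (Icc 0 t₁) := by
      apply monotoneOn_of_deriv_nonneg (convex_Icc 0 t₁) hMcont
      · rw [interior_Icc]
        exact fun x hx => (hMderiv x hx).differentiableAt.differentiableWithinAt
      · rw [interior_Icc]
        intro x hx
        rw [(hMderiv x hx).deriv]
        exact (hm₃pos x ⟨hx.1.le, hx.2.le⟩).le
    have ht₁mem : t₁ ∈ Icc (0:ℝ) t₁ := ⟨h0.le, le_refl _⟩
    have hMnn : 0 ≤ M t₁ := by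
      have h := hMmono h0mem ht₁mem h0.le
      rwa [hM0] at h
    have h := hψmono h0mem ht₁mem h0.le
    rw [hψ0] at h
    simp only [hψdef] at h
    have he1 : Real.exp (-(M t₁)) ≤ 1 := by
      calc Real.exp (-(M t₁)) ≤ Real.exp 0 := Real.exp_le_exp.mpr (by linarith)
        _ = 1 := Real.exp_zero
    have hspos' := hspos t₁ ht₁mem
    nlinarith [Real.exp_pos (-(M t₁))]
  -- Part 2 : persistence of C₂ ≤ (m₁+m₂)/m₃
  have hm₃pos : ∀ t ∈ Ico (0:ℝ) T, 0 < m₃ t := by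
    intro t ht
    have h := hord t ht
    have h' := key₁ t ht
    linarith [h.1, h.2]
  set r : ℝ → ℝ := fun u => (m₁ u + m₂ u) / m₃ u with hrdef
  have hrderiv : ∀ t ∈ Ico (0:ℝ) T, HasDerivAt r
      ((((m₁ t) ^ 2 + m₂ t * m₃ t + ((m₂ t) ^ 2 + m₁ t * m₃ t)) * m₃ t -
        (m₁ t + m₂ t) * ((m₃ t) ^ 2 + m₁ t * m₂ t)) / (m₃ t) ^ 2) t := fun t ht =>
    ((h₁ t ht).add (h₂ t ht)).div (h₃ t ht) (hm₃pos t ht).ne'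
  have hrmono : MonotoneOn r (Ico 0 T) := by
    apply monotoneOn_of_deriv_nonneg (convex_Ico 0 T)
      (fun t ht => (hrderiv t ht).continuousAt.continuousWithinAt)
    · rw [interior_Ico]
      exact fun x hx => (hrderiv x ⟨hx.1.le, hx.2⟩).differentiableAt.differentiableWithinAt
    · rw [interior_Ico]
      intro x hx
      have hxI : x ∈ Ico (0:ℝ) T := ⟨hx.1.le, hx.2⟩
      rw [(hrderiv x hxI).deriv]
      apply div_nonneg _ (sq_nonneg _)
      obtain ⟨hab, hbc⟩ := hord x hxI
      nlinarith [mul_nonneg (sq_nonneg (m₁ x)) (sub_nonneg.2 hbc),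
        mul_nonneg (sq_nonneg (m₂ x)) (sub_nonneg.2 (hab.trans hbc))]
  intro t ht
  refine ⟨key₁ t ht, ?_⟩
  have h := hrmono ⟨le_refl (0:ℝ), hT⟩ ht ht.1
  calc C₂ ≤ r 0 := hinit₂
    _ ≤ r t := h
end
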